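/- Let f : ℝ → ℝ be continuous with antiderivative F(t) = ∫₀ᵗ f(s) ds, c₁, c₂, c₃, c₄, c₅ ∈ ℝ, and let g : ℝ → ℝ be three times continuously differentiable and satisfy -z·g'(z) + c₂·g(z) + c₃·g(z)·g'''(z) + c₄·g(z)·g'(z) + c₅·g'(z)·g''(z) = 0 for all z ∈ ℝ. Define u(x,t) = exp(c₂·F(t))·g((x + c₁)·exp(−F(t))), α(t) = c₃·f(t)·exp(−(c₂−3)·F(t)), β(t) = c₄·f(t)·exp(−(c₂−1)·F(t)), δ(t) = c₅·f(t)·exp(−(c₂−3)·F(t)). Then u satisfies u_t + α(t)·u·u_{xxx} + δ(t)·u_x·u_{xx} + β(t)·u·u_x = 0 on ℝ². -/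

import Mathlib

theorem stmt_15 (f : ℝ → ℝ) (hf : Continuous f)
    (F : ℝ → ℝ) (hF : F = fun t => ∫ s in (0:ℝ)..t, f s)
    (c₁ c₂ c₃ c₄ c₅ : ℝ)
    (g : ℝ → ℝ) (hg : ContDiff ℝ 3 g)
    (hode : ∀ z : ℝ,
      -z * deriv g z + c₂ * g z + c₃ * g z * iteratedDeriv 3 g z
        + c₄ * g z * deriv g z + c₅ * deriv g z * iteratedDeriv 2 g z = 0)
    (u : ℝ → ℝ → ℝ)
    (hu : u = fun x t => Real.exp (c₂ * F t) * g ((x + c₁) * Real.exp (-F t)))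
    (α β δ : ℝ → ℝ)
    (hα : α = fun t => c₃ * f t * Real.exp (-(c₂ - 3) * F t))
    (hβ : β = fun t => c₄ * f t * Real.exp (-(c₂ - 1) * F t))
    (hδ : δ = fun t => c₅ * f t * Real.exp (-(c₂ - 3) * F t)) :
    ∀ x t : ℝ,
      deriv (fun τ => u x τ) t
        + α t * u x t * iteratedDeriv 3 (fun y => u y t) x
        + δ t * deriv (fun y => u y t) x * iteratedDeriv 2 (fun y => u y t) x
        + β t * u x t * deriv (fun y => u y t) x = 0 := by
  -- differentiability facts
  have hg' : ContDiff ℝ (2+1) g := by exact_mod_cast hg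
  have h2 : ContDiff ℝ (1+1) (deriv g) := by
    exact_mod_cast (contDiff_succ_iff_deriv.mp hg').2.2
  have h1 : ContDiff ℝ (0+1) (deriv (deriv g)) := by
    exact_mod_cast (contDiff_succ_iff_deriv.mp h2).2.2
  have hgd : Differentiable ℝ g := (contDiff_succ_iff_deriv.mp hg').1
  have hgd1 : Differentiable ℝ (deriv g) := (contDiff_succ_iff_deriv.mp h2).1
  have hgd2 : Differentiable ℝ (deriv (deriv g)) := (contDiff_succ_iff_deriv.mp h1).1
  intro x t
  set A := Real.exp (c₂ * F t) with hA
  set Em := Real.exp (-F t) with hEm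
  set z := (x + c₁) * Em with hz
  -- generic spatial derivative lemma
  have key : ∀ (G : ℝ → ℝ), Differentiable ℝ G → ∀ a : ℝ,
      deriv (fun y => a * G ((y + c₁) * Em)) = fun y => a * Em * deriv G ((y + c₁) * Em) := by
    intro G hG a
    funext y
    have hlin : HasDerivAt (fun y : ℝ => (y + c₁) * Em) (1 * Em) y :=
      ((hasDerivAt_id y).add_const c₁).mul_const Em
    have hcomp := ((hG ((y + c₁) * Em)).hasDerivAt.comp y hlin).const_mul a
    simp only [Function.comp_def] at hcomp
    rw [hcomp.deriv]; ring
  -- spatial derivatives of u at time t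
  have hux : deriv (fun y => u y t) x = A * Em * deriv g z := by
    rw [hu]; rw [key g hgd A]
  have hfun1 : (fun y => u y t) = fun y => A * g ((y + c₁) * Em) := by
    rw [hu]
  have hd1 : deriv (fun y => u y t) = fun y => A * Em * deriv g ((y + c₁) * Em) := by
    rw [hfun1, key g hgd A]
  have hd2 : deriv (deriv (fun y => u y t)) = fun y => A * Em * Em * deriv (deriv g) ((y + c₁) * Em) := by
    rw [hd1, key (deriv g) hgd1 (A * Em)]
  have hd3 : deriv (deriv (deriv (fun y => u y t))) =
      fun y => A * Em * Em * Em * deriv (deriv (deriv g)) ((y + c₁) * Em) := by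
    rw [hd2, key (deriv (deriv g)) hgd2 (A * Em * Em)]
  have huxx : iteratedDeriv 2 (fun y => u y t) x = A * Em * Em * deriv (deriv g) z := by
    simp only [iteratedDeriv_succ, iteratedDeriv_one, iteratedDeriv_zero, hd2]
    rfl
  have huxxx : iteratedDeriv 3 (fun y => u y t) x
      = A * Em * Em * Em * deriv (deriv (deriv g)) z := by
    simp only [iteratedDeriv_succ, iteratedDeriv_one, iteratedDeriv_zero, hd3]
    rfl
  -- time derivative
  have hF' : HasDerivAt F (f t) t := by
    rw [hF]
    exact intervalIntegral.integral_hasDerivAt_right (hf.intervalIntegrable 0 t)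
      (hf.stronglyMeasurableAtFilter _ _) hf.continuousAt
  have hE1 : HasDerivAt (fun τ => Real.exp (c₂ * F τ)) (A * (c₂ * f t)) t :=
    (hF'.const_mul c₂).exp
  have hE2 : HasDerivAt (fun τ => (x + c₁) * Real.exp (-F τ)) ((Em * -f t) * (x + c₁)) t := by
    have := (hF'.neg.exp).const_mul (x + c₁)
    exact this.congr_deriv (by simp only [hEm, Pi.neg_apply]; ring)
  have hG : HasDerivAt (fun τ => g ((x + c₁) * Real.exp (-F τ)))
      (deriv g z * ((Em * -f t) * (x + c₁))) t :=
    (hgd z).hasDerivAt.comp t hE2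
  have hut : deriv (fun τ => u x τ) t
      = A * (c₂ * f t) * g z + A * (deriv g z * ((Em * -f t) * (x + c₁))) := by
    rw [hu]
    exact (hE1.mul hG).deriv
  -- rewrite the ODE in terms of iterated derivs
  have hodez := hode z
  simp only [iteratedDeriv_succ, iteratedDeriv_one, iteratedDeriv_zero] at hodez
  -- exponential identities
  have f1 : Real.exp (-(c₂ - 3) * F t) * A * Em * Em * Em = 1 := by
    rw [hA, hEm, ← Real.exp_add, ← Real.exp_add, ← Real.exp_add, ← Real.exp_add,
      show -(c₂ - 3) * F t + c₂ * F t + -F t + -F t + -F t = 0 by ring, Real.exp_zero]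
  have f2 : Real.exp (-(c₂ - 1) * F t) * A * Em = 1 := by
    rw [hA, hEm, ← Real.exp_add, ← Real.exp_add,
      show -(c₂ - 1) * F t + c₂ * F t + -F t = 0 by ring, Real.exp_zero]
  -- final algebra
  rw [hut, hux, huxx, huxxx, hα, hβ, hδ, hu]
  simp only
  have hzz : (x + c₁) * Em = z := rfl
  rw [hzz]
  linear_combination (f t * A) * hodez
    + (c₃ * f t * A * g z * deriv (deriv (deriv g)) z) * f1
    + (c₅ * f t * A * deriv g z * deriv (deriv g) z) * f1
    + (c₄ * f t * A * g z * deriv g z) * f2
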